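/- Let r ≥ 1, n ∈ ℕ and let p ∈ ℂ[x] be a polynomial with deg p ≤ n. Then p(x) = ∑_{k=0}^{n} C_k^r · H^{(r)}_{k,q}(x|λ), where C_k^r = (1/([k]_q! · (1 − λ)^r)) · ∑_{l=0}^{n−k} ( ∑_{j=0}^{r} binom(r,j) · (−λ)^{r−j} · ∑_{(l_1,…,l_j) ∈ ℕ^j, l_1+⋯+l_j = l} 1/([l_1]_q! ⋯ [l_j]_q!) ) · (D_q^{k+l} p)(0); here binom(r,j) is the ordinary binomial coefficient, the inner sum over the empty tuple (j = 0) equals δ_{l,0}, and D_q^{k+l} p denotes the (k+l)-fold q-derivative of p. -/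

import Mathlib

open Finset Polynomial

/-- The `q`-integer `[n]_q = (1 - q^n)/(1 - q)` viewed in `ℂ`. -/
noncomputable def qInt (q : ℝ) (n : ℕ) : ℂ := (1 - (q : ℂ) ^ n) / (1 - (q : ℂ))

/-- The `q`-factorial `[n]_q! = ∏_{j=1}^n [j]_q`. -/
noncomputable def qFact (q : ℝ) (n : ℕ) : ℂ := ∏ j ∈ Finset.range n, qInt q (j + 1)

/-- The `q`-binomial coefficient `[n]_q!/([k]_q! [n-k]_q!)`. -/
noncomputable def qBinom (q : ℝ) (n k : ℕ) : ℂ := qFact q n / (qFact q k * qFact q (n - k))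

/-- The formal `q`-exponential `e_q(t) = ∑ t^n/[n]_q!` in `ℂ[x][[t]]`. -/
noncomputable def qExp (q : ℝ) : PowerSeries (Polynomial ℂ) :=
  PowerSeries.mk fun n => Polynomial.C (1 / qFact q n)

/-- The formal series `e_q(xt) = ∑ x^n t^n/[n]_q!` in `ℂ[x][[t]]`. -/
noncomputable def qExpX (q : ℝ) : PowerSeries (Polynomial ℂ) :=
  PowerSeries.mk fun n => Polynomial.C (1 / qFact q n) * Polynomial.X ^ n

/-- `H : ℕ → ℂ[x]` is the family of order-`r` `q`-Frobenius-Euler polynomials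
`H^{(r)}_{n,q}(x|λ)`:
`(∑ H_n t^n/[n]_q!) ⬝ (e_q(t) - λ)^r = (1 - λ)^r e_q(xt)` in `ℂ[x][[t]]`. -/
def IsqFrobeniusEulerOrder (q : ℝ) (lam : ℂ) (r : ℕ) (H : ℕ → Polynomial ℂ) : Prop :=
  (PowerSeries.mk fun n => Polynomial.C (1 / qFact q n) * H n) *
      (qExp q - PowerSeries.C (Polynomial.C lam)) ^ r =
    PowerSeries.C (Polynomial.C ((1 - lam) ^ r)) * qExpX q

/-- The `q`-derivative on `ℂ[x]`, determined by `D_q x^n = [n]_q x^(n-1)`. -/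
noncomputable def qDeriv (q : ℝ) (p : Polynomial ℂ) : Polynomial ℂ :=
  p.sum fun n a => Polynomial.C (a * qInt q n) * Polynomial.X ^ (n - 1)

section Aux

lemma qInt_ne_zero {q : ℝ} (hq0 : 0 < q) (hq1 : q < 1) (m : ℕ) : qInt q (m + 1) ≠ 0 := by
  have hq1' : (q : ℂ) ≠ 1 := by
    simpa using (ne_of_lt hq1)
  have hpow : ((q : ℂ)) ^ (m + 1) ≠ 1 := by
    have h : q ^ (m + 1) < 1 := pow_lt_one₀ (le_of_lt hq0) hq1 (Nat.succ_ne_zero m)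
    intro hc
    have : ((q ^ (m + 1) : ℝ) : ℂ) = ((1 : ℝ) : ℂ) := by push_cast; rw [hc]
    exact absurd (Complex.ofReal_inj.mp this) (ne_of_lt h)
  unfold qInt
  exact div_ne_zero (sub_ne_zero.mpr (Ne.symm hpow)) (sub_ne_zero.mpr (Ne.symm hq1'))

lemma qFact_ne_zero {q : ℝ} (hq0 : 0 < q) (hq1 : q < 1) (m : ℕ) : qFact q m ≠ 0 := by
  unfold qFact
  exact Finset.prod_ne_zero_iff.mpr fun j _ => qInt_ne_zero hq0 hq1 j

lemma coeff_qDeriv (q : ℝ) (p : Polynomial ℂ) (m : ℕ) :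
    (qDeriv q p).coeff m = p.coeff (m + 1) * qInt q (m + 1) := by
  rw [qDeriv, Polynomial.sum_def, Polynomial.finset_sum_coeff]
  simp only [Polynomial.coeff_C_mul, Polynomial.coeff_X_pow, mul_ite, mul_one, mul_zero]
  rw [Finset.sum_eq_single (m + 1)]
  · simp
  · intro b _ hbne
    rcases Nat.eq_zero_or_pos b with rfl | hbpos
    · simp [qInt]
    · have : b - 1 ≠ m := by omega
      rw [if_neg (by omega : ¬ m = b - 1)]
  · intro h
    simp [Polynomial.notMem_support_iff.1 h]

lemma coeff_qDeriv_iterate (q : ℝ) (s : ℕ) (p : Polynomial ℂ) (m : ℕ) :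
    ((qDeriv q)^[s] p).coeff m
      = p.coeff (m + s) * ∏ i ∈ Finset.range s, qInt q (m + i + 1) := by
  induction s generalizing p with
  | zero => simp
  | succ s ih =>
    rw [Function.iterate_succ_apply, ih, coeff_qDeriv, Finset.prod_range_succ]
    have h1 : m + (s + 1) = m + s + 1 := by omega
    rw [h1]
    ring

lemma eval_zero_qDeriv_iterate (q : ℝ) (p : Polynomial ℂ) (s : ℕ) :
    ((qDeriv q)^[s] p).eval 0 = p.coeff s * qFact q s := by
  rw [← Polynomial.coeff_zero_eq_eval_zero, coeff_qDeriv_iterate, qFact]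
  simp

lemma sum_antidiagonalTuple_succ {M : Type*} [AddCommMonoid M] (j l : ℕ)
    (f : (Fin (j + 1) → ℕ) → M) :
    ∑ t ∈ Finset.Nat.antidiagonalTuple (j + 1) l, f t
      = ∑ ab ∈ Finset.HasAntidiagonal.antidiagonal l, ∑ t ∈ Finset.Nat.antidiagonalTuple j ab.2,
          f (Fin.cons ab.1 t) := by
  rw [Finset.sum_sigma']
  refine Finset.sum_nbij' (fun t => ⟨(t 0, ∑ i, Fin.tail t i), Fin.tail t⟩)
    (fun x => Fin.cons x.1.1 x.2) ?_ ?_ ?_ ?_ ?_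
  · intro t ht
    rw [Finset.Nat.mem_antidiagonalTuple, Fin.sum_univ_succ] at ht
    simp only [Finset.mem_sigma, Finset.Nat.mem_antidiagonalTuple, Finset.HasAntidiagonal.mem_antidiagonal]
    exact ⟨ht, trivial⟩
  · intro x hx
    simp only [Finset.mem_sigma, Finset.Nat.mem_antidiagonalTuple,
      Finset.HasAntidiagonal.mem_antidiagonal] at hx
    rw [Finset.Nat.mem_antidiagonalTuple, Fin.sum_univ_succ]
    simp only [Fin.cons_zero, Fin.cons_succ]
    rw [hx.2, hx.1]
  · intro t ht
    exact Fin.cons_self_tail t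
  · intro x hx
    simp only [Finset.mem_sigma, Finset.Nat.mem_antidiagonalTuple,
      Finset.mem_antidiagonal] at hx
    simp only [Fin.tail_cons, Fin.cons_zero]
    rw [hx.2]
  · intro t ht
    rw [Fin.cons_self_tail]

lemma coeff_pow_tuple {R : Type*} [CommSemiring R] (φ : PowerSeries R) (j l : ℕ) :
    PowerSeries.coeff l (φ ^ j)
      = ∑ t ∈ Finset.Nat.antidiagonalTuple j l, ∏ i, PowerSeries.coeff (t i) φ := by
  induction j generalizing l with
  | zero =>
    cases l with
    | zero => simp [Finset.Nat.antidiagonalTuple_zero_zero]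
    | succ l => simp [Finset.Nat.antidiagonalTuple_zero_succ]
  | succ j ih =>
    rw [pow_succ', PowerSeries.coeff_mul, sum_antidiagonalTuple_succ]
    refine Finset.sum_congr rfl fun ab _ => ?_
    rw [ih, Finset.mul_sum]
    refine Finset.sum_congr rfl fun t _ => ?_
    rw [Fin.prod_univ_succ]
    simp

lemma coeff_qExp_pow (q : ℝ) (j l : ℕ) :
    PowerSeries.coeff l (qExp q ^ j)
      = Polynomial.C (∑ t ∈ Finset.Nat.antidiagonalTuple j l, ∏ i, 1 / qFact q (t i)) := by
  rw [coeff_pow_tuple, map_sum]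
  refine Finset.sum_congr rfl fun t _ => ?_
  rw [map_prod]
  refine Finset.prod_congr rfl fun i _ => ?_
  simp [qExp]

/-- abbreviation for the inner coefficient sum. -/
noncomputable def bfun (q : ℝ) (lam : ℂ) (r m : ℕ) : ℂ :=
  ∑ j ∈ Finset.range (r + 1), (r.choose j : ℂ) * (-lam) ^ (r - j) *
    ∑ t ∈ Finset.Nat.antidiagonalTuple j m, ∏ i, 1 / qFact q (t i)

lemma coeff_sub_pow (q : ℝ) (lam : ℂ) (r m : ℕ) :
    PowerSeries.coeff m
        ((qExp q - PowerSeries.C (Polynomial.C lam)) ^ r)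
      = Polynomial.C (bfun q lam r m) := by
  have hsub : qExp q - PowerSeries.C (Polynomial.C lam)
      = qExp q + PowerSeries.C (Polynomial.C (-lam)) := by
    rw [map_neg, map_neg, sub_eq_add_neg]
  rw [hsub, add_pow, map_sum, bfun, map_sum]
  refine Finset.sum_congr rfl fun j _ => ?_
  rw [← map_pow, ← map_pow]
  have hn : ((r.choose j : ℕ) : PowerSeries (Polynomial ℂ))
      = PowerSeries.C (Polynomial.C ((r.choose j : ℕ) : ℂ)) := by
    rw [map_natCast, map_natCast]
  rw [hn, PowerSeries.coeff_mul_C, PowerSeries.coeff_mul_C, coeff_qExp_pow,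
    ← Polynomial.C_mul, ← Polynomial.C_mul]
  congr 1
  ring

lemma sum_triangle' {M : Type*} [AddCommMonoid M] (n : ℕ) (f : ℕ → ℕ → M) :
    ∑ m ∈ Finset.range (n + 1), ∑ k ∈ Finset.range (m + 1), f m k
      = ∑ k ∈ Finset.range (n + 1), ∑ l ∈ Finset.range (n - k + 1), f (k + l) k := by
  induction n with
  | zero => simp
  | succ n ih =>
    rw [Finset.sum_range_succ, ih,
      Finset.sum_range_succ (f := fun k => ∑ l ∈ Finset.range (n + 1 - k + 1), f (k + l) k),
      Finset.sum_range_succ (f := fun k => f (n + 1) k)]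
    have hstep : ∀ k ∈ Finset.range (n + 1),
        ∑ l ∈ Finset.range (n + 1 - k + 1), f (k + l) k
          = ∑ l ∈ Finset.range (n - k + 1), f (k + l) k + f (n + 1) k := by
      intro k hk
      have hk' : k ≤ n := Nat.lt_succ_iff.mp (Finset.mem_range.mp hk)
      have h1 : n + 1 - k + 1 = (n - k + 1) + 1 := by omega
      rw [h1, Finset.sum_range_succ]
      congr 2
      omega
    rw [Finset.sum_congr rfl hstep, Finset.sum_add_distrib]
    have hlast : ∑ l ∈ Finset.range (n + 1 - (n + 1) + 1), f (n + 1 + l) (n + 1)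
        = f (n + 1) (n + 1) := by
      simp
    rw [hlast]
    abel

end Aux

/-- For `r ≥ 1`, every `p ∈ ℂ[x]` with `deg p ≤ n` expands as
`p = ∑_{k=0}^n C_k^r H^{(r)}_{k,q}(x|λ)` with
`C_k^r = (1/([k]_q! (1-λ)^r)) ∑_{l=0}^{n-k}
  (∑_{j=0}^r binom(r,j) (-λ)^{r-j} ∑_{l₁+⋯+l_j=l} 1/([l₁]_q! ⋯ [l_j]_q!)) ((D_q)^{k+l} p)(0)`. -/
theorem expansion_in_qFrobeniusEulerOrder_basis
    (q : ℝ) (hq0 : 0 < q) (hq1 : q < 1) (lam : ℂ) (hlam : lam ≠ 1)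
    (r : ℕ) (hr : 1 ≤ r)
    (H : ℕ → Polynomial ℂ) (hH : IsqFrobeniusEulerOrder q lam r H)
    (n : ℕ) (p : Polynomial ℂ) (hp : p.natDegree ≤ n) :
    p = ∑ k ∈ Finset.range (n + 1),
      Polynomial.C ((1 / (qFact q k * (1 - lam) ^ r)) *
        ∑ l ∈ Finset.range (n - k + 1),
          (∑ j ∈ Finset.range (r + 1), (r.choose j : ℂ) * (-lam) ^ (r - j) *
            ∑ t ∈ Finset.Nat.antidiagonalTuple j l, ∏ i, 1 / qFact q (t i)) *
          ((qDeriv q)^[k + l] p).eval 0) * H k := by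
  have hC1 : (1 - lam) ^ r ≠ 0 := pow_ne_zero _ (sub_ne_zero.mpr (Ne.symm hlam))
  have hF : ∀ m, qFact q m ≠ 0 := qFact_ne_zero hq0 hq1
  -- the expansion of X^m in terms of H
  have hX : ∀ m : ℕ, (Polynomial.X : Polynomial ℂ) ^ m
      = Polynomial.C (qFact q m / (1 - lam) ^ r) *
        ∑ k ∈ Finset.range (m + 1),
          Polynomial.C (1 / qFact q k * bfun q lam r (m - k)) * H k := by
    intro m
    have hcoeff := congrArg (PowerSeries.coeff m) hH
    rw [PowerSeries.coeff_mul, PowerSeries.coeff_C_mul] at hcoeff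
    simp only [PowerSeries.coeff_mk, coeff_sub_pow] at hcoeff
    rw [Finset.Nat.sum_antidiagonal_eq_sum_range_succ_mk] at hcoeff
    simp only [qExpX, PowerSeries.coeff_mk] at hcoeff
    have hterm : ∀ k ∈ Finset.range (m + 1),
        Polynomial.C (1 / qFact q k) * H k * Polynomial.C (bfun q lam r (m - k))
          = Polynomial.C (1 / qFact q k * bfun q lam r (m - k)) * H k := by
      intro k _
      rw [Polynomial.C_mul]
      ring
    rw [Finset.sum_congr rfl hterm] at hcoeff
    rw [hcoeff, ← mul_assoc, ← Polynomial.C_mul, ← mul_assoc, ← Polynomial.C_mul]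
    have : qFact q m / (1 - lam) ^ r * (1 - lam) ^ r * (1 / qFact q m) = 1 := by
      rw [div_mul_cancel₀ _ hC1, mul_one_div, div_self (hF m)]
    rw [this, Polynomial.C_1, one_mul]
  -- rewrite p as a sum of monomials
  have hrepr : p = ∑ m ∈ Finset.range (n + 1), Polynomial.C (p.coeff m) * Polynomial.X ^ m := by
    conv_lhs => rw [Polynomial.as_sum_range' p (n + 1) (Nat.lt_succ_of_le hp)]
    exact Finset.sum_congr rfl fun m _ => by
      rw [← Polynomial.C_mul_X_pow_eq_monomial]
  have hL : p = ∑ m ∈ Finset.range (n + 1), ∑ k ∈ Finset.range (m + 1),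
      Polynomial.C (p.coeff m * (qFact q m / (1 - lam) ^ r) *
        (1 / qFact q k * bfun q lam r (m - k))) * H k := by
    conv_lhs => rw [hrepr]
    refine Finset.sum_congr rfl fun m _ => ?_
    rw [hX m, Finset.mul_sum, Finset.mul_sum]
    refine Finset.sum_congr rfl fun k _ => ?_
    rw [← mul_assoc, ← mul_assoc, ← Polynomial.C_mul, ← Polynomial.C_mul]
  conv_lhs => rw [hL]
  rw [sum_triangle']
  refine Finset.sum_congr rfl fun k _ => ?_
  have hg : ∀ l ∈ Finset.range (n - k + 1),
      Polynomial.C (p.coeff (k + l) * (qFact q (k + l) / (1 - lam) ^ r) *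
          (1 / qFact q k * bfun q lam r (k + l - k))) * H k
        = Polynomial.C (p.coeff (k + l) * (qFact q (k + l) / (1 - lam) ^ r) *
          (1 / qFact q k * bfun q lam r l)) * H k := by
    intro l _
    rw [Nat.add_sub_cancel_left]
  rw [Finset.sum_congr rfl hg, ← Finset.sum_mul, ← map_sum]
  congr 2
  rw [Finset.mul_sum]
  refine Finset.sum_congr rfl fun l _ => ?_
  rw [eval_zero_qDeriv_iterate]
  simp only [bfun]
  ring
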